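/- For all integers r and n with r ≥ 3 and r+1 ≤ n ≤ 2r−2, the maximum number of hyperedges in an n-vertex connected BP_3-free r-uniform hypergraph equals 2; moreover, every n-vertex connected BP_3-free r-uniform hypergraph with exactly 2 hyperedges consists of two hyperedges sharing at least two common vertices. -/

import Mathlib

namespace Berge

def IsBergePath {n : ℕ} (E : Finset (Finset (Fin n))) (k : ℕ)
    (v : Fin (k + 1) → Fin n) (f : Fin k → Finset (Fin n)) : Prop :=
  Function.Injective v ∧ Function.Injective f ∧ (∀ i, f i ∈ E) ∧
    ∀ i : Fin k, v i.castSucc ∈ f i ∧ v i.succ ∈ f i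

def HasBergePath {n : ℕ} (E : Finset (Finset (Fin n))) (k : ℕ) : Prop :=
  ∃ v f, IsBergePath E k v f

def BPFree {n : ℕ} (E : Finset (Finset (Fin n))) (k : ℕ) : Prop :=
  ¬ HasBergePath E k

def Connected {n : ℕ} (E : Finset (Finset (Fin n))) : Prop :=
  ∀ x y : Fin n, ∃ (k : ℕ) (v : Fin (k + 1) → Fin n) (f : Fin k → Finset (Fin n)),
    IsBergePath E k v f ∧ (∃ i, v i = x) ∧ (∃ i, v i = y)

def Uniform {n : ℕ} (E : Finset (Finset (Fin n))) (r : ℕ) : Prop :=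
  ∀ e ∈ E, e.card = r

noncomputable def exConn (n r k : ℕ) : ℕ :=
  sSup {m | ∃ E : Finset (Finset (Fin n)),
    Uniform E r ∧ Connected E ∧ BPFree E k ∧ E.card = m}

def IsBergeCycle {n : ℕ} (E : Finset (Finset (Fin n))) (k : ℕ)
    (v : Fin k → Fin n) (f : Fin k → Finset (Fin n)) : Prop :=
  Function.Injective v ∧ Function.Injective f ∧ (∀ i, f i ∈ E) ∧
    ∀ i : Fin k, v i ∈ f i ∧ v ⟨(i.val + 1) % k, Nat.mod_lt _ i.pos⟩ ∈ f i

/-! ### Auxiliary lemmas -/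

lemma inj2 {α} {x y : α} (h1 : x ≠ y) : Function.Injective ![x, y] := by
  intro i j h; fin_cases i <;> fin_cases j <;> simp_all

lemma inj3 {α} {x y z : α} (h1 : x ≠ y) (h2 : x ≠ z) (h3 : y ≠ z) :
    Function.Injective ![x, y, z] := by
  intro i j h; fin_cases i <;> fin_cases j <;> simp_all

lemma inj4 {α} {x y z w : α} (h1 : x ≠ y) (h2 : x ≠ z) (h3 : x ≠ w)
    (h4 : y ≠ z) (h5 : y ≠ w) (h6 : z ≠ w) : Function.Injective ![x, y, z, w] := by
  intro i j h; fin_cases i <;> fin_cases j <;> simp_all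

/-- Any two r-sets in `Fin n` with `n ≤ 2r - 2` intersect in at least 2 elements. -/
lemma inter_ge {r n : ℕ} (hr : 3 ≤ r) (hn2 : n ≤ 2 * r - 2)
    (e f : Finset (Fin n)) (he : e.card = r) (hf : f.card = r) :
    2 ≤ (e ∩ f).card := by
  have h1 : (e ∪ f).card + (e ∩ f).card = e.card + f.card :=
    Finset.card_union_add_card_inter e f
  have h2 : (e ∪ f).card ≤ n := by
    simpa using Finset.card_le_univ (e ∪ f)
  omega

/-- Distinct sets of equal cardinality have nonempty difference. -/
lemma sdiff_ne {n : ℕ} (e f : Finset (Fin n)) (hne : e ≠ f) (h : f.card ≤ e.card) :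
    (e \ f).Nonempty := by
  rw [Finset.sdiff_nonempty]
  intro hsub
  exact hne (Finset.eq_of_subset_of_card_le hsub h)

/-- A hypergraph with at most 2 edges has no Berge path of length 3. -/
lemma bpfree_of_card_le_two {n : ℕ} (E : Finset (Finset (Fin n))) (h : E.card ≤ 2) :
    BPFree E 3 := by
  rintro ⟨v, f, _, hfinj, hfE, _⟩
  have : (Finset.univ : Finset (Fin 3)).card ≤ E.card :=
    Finset.card_le_card_of_injOn f (fun i _ => hfE i) hfinj.injOn
  simp at this
  omega

/-- Upper bound: any BP₃-free r-uniform hypergraph on `n ≤ 2r-2` vertices has ≤ 2 edges. -/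
lemma card_le_two {r n : ℕ} (hr : 3 ≤ r) (hn2 : n ≤ 2 * r - 2)
    (E : Finset (Finset (Fin n))) (hu : Uniform E r) (hbp : BPFree E 3) :
    E.card ≤ 2 := by
  by_contra hlt
  push_neg at hlt
  obtain ⟨T, hTE, hT3⟩ := Finset.exists_subset_card_eq (hlt : 3 ≤ E.card)
  rw [Finset.card_eq_three] at hT3
  obtain ⟨a, b, c, hab, hac, hbc, rfl⟩ := hT3
  have ha : a ∈ E := hTE (by simp)
  have hb : b ∈ E := hTE (by simp)
  have hc : c ∈ E := hTE (by simp)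
  have hca := hu a ha; have hcb := hu b hb; have hcc := hu c hc
  -- pick the four vertices
  obtain ⟨v1, hv1⟩ := sdiff_ne a b hab (by omega)
  obtain ⟨v4, hv4⟩ := sdiff_ne c a (Ne.symm hac) (by omega)
  rw [Finset.mem_sdiff] at hv1 hv4
  have hbc2 : 1 < (b ∩ c).card := inter_ge hr hn2 b c hcb hcc
  obtain ⟨v3, hv3, hv34⟩ := Finset.exists_mem_ne hbc2 v4
  have hab2 : 1 < (a ∩ b).card := inter_ge hr hn2 a b hca hcb
  obtain ⟨v2, hv2, hv23⟩ := Finset.exists_mem_ne hab2 v3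
  rw [Finset.mem_inter] at hv2 hv3
  apply hbp
  refine ⟨![v1, v2, v3, v4], ![a, b, c], ?_, inj3 hab hac hbc, ?_, ?_⟩
  · refine inj4 ?_ ?_ ?_ hv23 ?_ hv34
    · rintro rfl; exact hv1.2 hv2.2
    · rintro rfl; exact hv1.2 hv3.1
    · rintro rfl; exact hv4.2 hv1.1
    · rintro rfl; exact hv4.2 hv2.1
  · intro i; fin_cases i <;> assumption
  · intro i; fin_cases i
    · exact ⟨hv1.1, hv2.1⟩
    · exact ⟨hv2.2, hv3.1⟩
    · exact ⟨hv3.2, hv4.1⟩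

/-- The trivial one-vertex Berge path. -/
lemma path_triv {n : ℕ} (E : Finset (Finset (Fin n))) (x : Fin n) :
    ∃ (k : ℕ) (v : Fin (k + 1) → Fin n) (f : Fin k → Finset (Fin n)),
      IsBergePath E k v f ∧ (∃ i, v i = x) ∧ (∃ i, v i = x) := by
  refine ⟨0, fun _ => x, Fin.elim0, ⟨?_, ?_, ?_, ?_⟩, ⟨0, rfl⟩, ⟨0, rfl⟩⟩
  · intro i j _; omega
  · intro i; exact i.elim0
  · intro i; exact i.elim0
  · intro i; exact i.elim0

/-- The construction: two edges covering all vertices make a connected hypergraph. -/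
lemma connected_pair {n : ℕ} (e f : Finset (Fin n)) (hne : e ≠ f) (z : Fin n)
    (hze : z ∈ e) (hzf : z ∈ f) (hcov : ∀ x : Fin n, x ∈ e ∨ x ∈ f) :
    Connected ({e, f} : Finset (Finset (Fin n))) := by
  have heE : e ∈ ({e, f} : Finset (Finset (Fin n))) := by simp
  have hfE : f ∈ ({e, f} : Finset (Finset (Fin n))) := by simp
  -- helper: a length-1 path inside a single edge
  have one : ∀ (g : Finset (Fin n)), g ∈ ({e, f} : Finset (Finset (Fin n))) →
      ∀ x y : Fin n, x ∈ g → y ∈ g → x ≠ y →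
      ∃ (k : ℕ) (v : Fin (k + 1) → Fin n) (f' : Fin k → Finset (Fin n)),
        IsBergePath {e, f} k v f' ∧ (∃ i, v i = x) ∧ (∃ i, v i = y) := by
    intro g hg x y hx hy hxy
    refine ⟨1, ![x, y], ![g], ⟨inj2 hxy, ?_, ?_, ?_⟩, ⟨0, rfl⟩, ⟨1, rfl⟩⟩
    · intro i j _; omega
    · intro i; fin_cases i; exact hg
    · intro i; fin_cases i; exact ⟨hx, hy⟩
  -- helper: a length-2 path through z
  have two : ∀ x y : Fin n, x ∈ e → x ∉ f → y ∈ f → y ∉ e →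
      ∃ (k : ℕ) (v : Fin (k + 1) → Fin n) (f' : Fin k → Finset (Fin n)),
        IsBergePath {e, f} k v f' ∧ (∃ i, v i = x) ∧ (∃ i, v i = y) := by
    intro x y hxe hxf hyf hye
    have hxz : x ≠ z := fun h => hxf (h ▸ hzf)
    have hxy : x ≠ y := fun h => hxf (h ▸ hyf)
    have hzy : z ≠ y := fun h => hye (h ▸ hze)
    refine ⟨2, ![x, z, y], ![e, f], ⟨inj3 hxz hxy hzy, inj2 hne, ?_, ?_⟩, ⟨0, rfl⟩, ⟨2, rfl⟩⟩
    · intro i; fin_cases i <;> assumption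
    · intro i; fin_cases i
      · exact ⟨hxe, hze⟩
      · exact ⟨hzf, hyf⟩
  intro x y
  by_cases hxy : x = y
  · subst hxy; exact path_triv _ x
  rcases hcov x with hx | hx <;> rcases hcov y with hy | hy
  · exact one e heE x y hx hy hxy
  · by_cases hxf : x ∈ f
    · exact one f hfE x y hxf hy hxy
    · by_cases hye : y ∈ e
      · exact one e heE x y hx hye hxy
      · exact two x y hx hxf hy hye
  · by_cases hxe : x ∈ e
    · exact one e heE x y hxe hy hxy
    · by_cases hyf : y ∈ f
      · exact one f hfE x y hx hyf hxy
      · obtain ⟨k, v, f', hp, hi, hj⟩ := two y x hy hyf hx hxe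
        exact ⟨k, v, f', hp, hj, hi⟩
  · exact one f hfE x y hx hy hxy

/-- Existence of the extremal configuration. -/
lemma exists_extremal {r n : ℕ} (hr : 3 ≤ r) (hn1 : r + 1 ≤ n) (hn2 : n ≤ 2 * r - 2) :
    ∃ E : Finset (Finset (Fin n)),
      Uniform E r ∧ Connected E ∧ BPFree E 3 ∧ E.card = 2 := by
  have hrn : r < n := by omega
  have hnrn : n - r < n := by omega
  set a : Fin n := ⟨r, hrn⟩ with ha
  set b : Fin n := ⟨n - r, hnrn⟩ with hb
  set e : Finset (Fin n) := Finset.Iio a with he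
  set f : Finset (Fin n) := Finset.Ici b with hf
  have hce : e.card = r := by rw [he, Fin.card_Iio]
  have hcf : f.card = r := by rw [hf, Fin.card_Ici]; show n - (n - r) = r; omega
  have hme : ∀ x : Fin n, x ∈ e ↔ x.val < r := by
    intro x; rw [he, Finset.mem_Iio]; exact Iff.rfl
  have hmf : ∀ x : Fin n, x ∈ f ↔ n - r ≤ x.val := by
    intro x; rw [hf, Finset.mem_Ici]; exact Iff.rfl
  have h0e : (⟨0, by omega⟩ : Fin n) ∈ e := (hme _).mpr (show 0 < r by omega)
  have h0f : (⟨0, by omega⟩ : Fin n) ∉ f := fun h =>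
    absurd ((hmf _).mp h) (show ¬ n - r ≤ 0 by omega)
  have hne : e ≠ f := ne_of_mem_of_not_mem' h0e h0f
  have hz : (⟨r - 1, by omega⟩ : Fin n) ∈ e ∧ (⟨r - 1, by omega⟩ : Fin n) ∈ f :=
    ⟨(hme _).mpr (show r - 1 < r by omega), (hmf _).mpr (show n - r ≤ r - 1 by omega)⟩
  refine ⟨{e, f}, ?_, ?_, ?_, ?_⟩
  · intro g hg
    rcases Finset.mem_insert.mp hg with rfl | hg
    · exact hce
    · rw [Finset.mem_singleton.mp hg]; exact hcf
  · refine connected_pair e f hne _ hz.1 hz.2 ?_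
    intro x
    rw [hme, hmf]
    omega -- covers since n ≤ 2r
  · apply bpfree_of_card_le_two
    apply le_trans (Finset.card_insert_le _ _)
    simp
  · rw [Finset.card_insert_of_notMem (by simpa using hne), Finset.card_singleton]

theorem stmt0 (r n : ℕ) (hr : 3 ≤ r) (hn1 : r + 1 ≤ n) (hn2 : n ≤ 2 * r - 2) :
    exConn n r 3 = 2 ∧
    ∀ E : Finset (Finset (Fin n)), Uniform E r → Connected E → BPFree E 3 →
      E.card = 2 → ∃ e f : Finset (Fin n), e ≠ f ∧ E = {e, f} ∧ 2 ≤ (e ∩ f).card := by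
  constructor
  · have h2mem : 2 ∈ {m | ∃ E : Finset (Finset (Fin n)),
        Uniform E r ∧ Connected E ∧ BPFree E 3 ∧ E.card = m} := by
      obtain ⟨E, h1, h2, h3, h4⟩ := exists_extremal hr hn1 hn2
      exact ⟨E, h1, h2, h3, h4⟩
    have hub : ∀ m ∈ {m | ∃ E : Finset (Finset (Fin n)),
        Uniform E r ∧ Connected E ∧ BPFree E 3 ∧ E.card = m}, m ≤ 2 := by
      rintro m ⟨E, hu, _, hbp, rfl⟩
      exact card_le_two hr hn2 E hu hbp
    exact le_antisymm (csSup_le ⟨2, h2mem⟩ hub)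
      (le_csSup ⟨2, fun m hm => hub m hm⟩ h2mem)
  · intro E hu _ _ hcard
    obtain ⟨e, f, hef, rfl⟩ := Finset.card_eq_two.mp hcard
    refine ⟨e, f, hef, rfl, ?_⟩
    exact inter_ge hr hn2 e f (hu e (by simp)) (hu f (by simp))

end Berge
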